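/- Suppose f, g : X → ℝ and c : X × X → ℝ satisfy: for every x in the support of α, ∫ exp((f(x) + g(y) - c(x,y))/γ) dβ(y) = 1, and c is G_c-Lipschitz in its first argument, i.e. |c(x,y) - c(x',y)| ≤ G_c‖x - x'‖ for all x, x', y. Then f is G_c-Lipschitz: |f(x) - f(x')| ≤ G_c‖x - x'‖ for all x, x' in supp(α). -/

import Mathlib

open MeasureTheory Real

/-- The support of a measure: points all of whose neighborhoods have positive measure. -/
def measSupport {E : Type*} [TopologicalSpace E] [MeasurableSpace E]
    (μ : Measure E) : Set E := {x | ∀ U ∈ nhds x, 0 < μ U}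

/-- If for every `x` in the support of `α` the Sinkhorn optimality condition
`∫ exp((f x + g y - c x y)/γ) dβ(y) = 1` holds, and `c` is `G_c`-Lipschitz in its
first argument, then `f` is `G_c`-Lipschitz on `supp α`. -/
theorem sinkhorn_potential_lipschitz {d : ℕ}
    (X : Set (EuclideanSpace ℝ (Fin d))) (hXcompact : IsCompact X)
    (γ Gc : ℝ) (hγ : 0 < γ)
    (α β : Measure (EuclideanSpace ℝ (Fin d)))
    [IsProbabilityMeasure α] [IsProbabilityMeasure β]
    (c : EuclideanSpace ℝ (Fin d) → EuclideanSpace ℝ (Fin d) → ℝ)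
    (f g : EuclideanSpace ℝ (Fin d) → ℝ)
    (hopt : ∀ x ∈ measSupport α,
      ∫ y, Real.exp ((f x + g y - c x y) / γ) ∂β = 1)
    (hc : ∀ x x' y : EuclideanSpace ℝ (Fin d), |c x y - c x' y| ≤ Gc * ‖x - x'‖) :
    ∀ x ∈ measSupport α, ∀ x' ∈ measSupport α, |f x - f x'| ≤ Gc * ‖x - x'‖ := by
  have hint : ∀ x ∈ measSupport α,
      Integrable (fun y => Real.exp ((f x + g y - c x y) / γ)) β := by
    intro x hx
    by_contra hni
    have := hopt x hx
    rw [integral_undef hni] at this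
    norm_num at this
  have key : ∀ x ∈ measSupport α, ∀ x' ∈ measSupport α,
      f x - f x' ≤ Gc * ‖x - x'‖ := by
    intro x hx x' hx'
    by_contra h
    push_neg at h
    set m := Real.exp ((f x - f x' - Gc * ‖x - x'‖) / γ) with hm
    have hm1 : 1 < m := by
      rw [hm]
      have h0 : 0 < (f x - f x' - Gc * ‖x - x'‖) / γ := div_pos (by linarith) hγ
      calc (1:ℝ) = Real.exp 0 := by simp
        _ < _ := Real.exp_lt_exp.mpr h0
    have hpt : ∀ y, m * Real.exp ((f x' + g y - c x' y) / γ)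
        ≤ Real.exp ((f x + g y - c x y) / γ) := by
      intro y
      rw [hm, ← Real.exp_add, ← add_div]
      apply Real.exp_le_exp.mpr
      have h2 := (abs_le.mp (hc x x' y)).2
      gcongr
      linarith
    have hmono : ∫ y, m * Real.exp ((f x' + g y - c x' y) / γ) ∂β
        ≤ ∫ y, Real.exp ((f x + g y - c x y) / γ) ∂β :=
      integral_mono ((hint x' hx').const_mul m) (hint x hx) hpt
    rw [integral_const_mul, hopt x hx, hopt x' hx', mul_one] at hmono
    linarith
  intro x hx x' hx'
  rw [abs_sub_le_iff]
  exact ⟨key x hx x' hx', (norm_sub_rev x x' ▸ key x' hx' x hx)⟩
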